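/- Suppose φ₁ ≥ φ₂ ≥ φ₃ ≥ φ₄ are real numbers with φ₁+φ₂+φ₃+φ₄ = 0 and φ₁ − φ₄ ≤ π, and each φⱼ ∈ (−3π/4, 3π/4]. Define Sⱼ ∈ (−π/4, 3π/4] by 2Sⱼ = arg(e^{2iφⱼ}) taken over the branch (−π/2, 3π/2]. Then S₁+S₂+S₃+S₄ = πn where n is the number of indices j with φⱼ ≤ −π/4, and subtracting π from the n largest values of the Sⱼ recovers exactly the multiset {φ₁, φ₂, φ₃, φ₄}. -/
import Mathlib

open Finset

/-- The entries of `x` rearranged into nonincreasing order. -/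
noncomputable def sortDesc {n : ℕ} (x : Fin n → ℝ) : Fin n → ℝ :=
  fun i => -((-x) (Tuple.sort (-x) i))

/-- `Majorizes x y` means `x ≺ y`: every partial sum of the `k` largest entries of `x`
is at most the corresponding partial sum for `y`, with equality for the total sum. -/
noncomputable def Majorizes {n : ℕ} (x y : Fin n → ℝ) : Prop :=
  (∀ k : ℕ, k ≤ n →
      ∑ i ∈ univ.filter (fun i : Fin n => (i : ℕ) < k), sortDesc x i ≤
        ∑ i ∈ univ.filter (fun i : Fin n => (i : ℕ) < k), sortDesc y i) ∧
  ∑ i, x i = ∑ i, y i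

lemma sortDesc_perm {n : ℕ} (x : Fin n → ℝ) (σ : Equiv.Perm (Fin n)) :
    sortDesc (x ∘ σ) = sortDesc x := by
  funext i
  have h := Tuple.comp_perm_comp_sort_eq_comp_sort (σ := σ) (f := -x)
  have hx : (-(x ∘ σ)) = (-x) ∘ σ := rfl
  simp only [sortDesc, hx]
  exact congrFun (congrArg (fun g => -g) h) i

lemma sortDesc_of_antitone {n : ℕ} {x : Fin n → ℝ} (h : Antitone x) : sortDesc x = x := by
  have hm : Monotone (-x) := h.neg
  funext i
  simp [sortDesc, (Tuple.sort_eq_refl_iff_monotone).mpr hm]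

lemma antitone4 {x : Fin 4 → ℝ} (h01 : x 1 ≤ x 0) (h12 : x 2 ≤ x 1) (h23 : x 3 ≤ x 2) :
    Antitone x := by
  intro i j hij
  fin_cases i <;> fin_cases j <;> simp_all <;> linarith

def rot1 : Equiv.Perm (Fin 4) := ⟨![1, 2, 3, 0], ![3, 0, 1, 2], by decide, by decide⟩
def rot2 : Equiv.Perm (Fin 4) := ⟨![2, 3, 0, 1], ![2, 3, 0, 1], by decide, by decide⟩
def rot3 : Equiv.Perm (Fin 4) := ⟨![3, 0, 1, 2], ![1, 2, 3, 0], by decide, by decide⟩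

lemma mrot1 (g : Fin 4 → ℝ) :
    (↑[g 3, g 0, g 1, g 2] : Multiset ℝ) = ↑[g 0, g 1, g 2, g 3] :=
  Multiset.coe_eq_coe.mpr (by simpa using (List.rotate_perm [g 3, g 0, g 1, g 2] 1).symm)

lemma mrot2 (g : Fin 4 → ℝ) :
    (↑[g 2, g 3, g 0, g 1] : Multiset ℝ) = ↑[g 0, g 1, g 2, g 3] :=
  Multiset.coe_eq_coe.mpr (by simpa using (List.rotate_perm [g 2, g 3, g 0, g 1] 2).symm)

lemma mrot3 (g : Fin 4 → ℝ) :
    (↑[g 1, g 2, g 3, g 0] : Multiset ℝ) = ↑[g 0, g 1, g 2, g 3] :=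
  Multiset.coe_eq_coe.mpr (by simpa using (List.rotate_perm [g 1, g 2, g 3, g 0] 3).symm)

theorem stmt_17 (φ : Fin 4 → ℝ)
    (hord : φ 0 ≥ φ 1 ∧ φ 1 ≥ φ 2 ∧ φ 2 ≥ φ 3)
    (hsum : φ 0 + φ 1 + φ 2 + φ 3 = 0)
    (hspread : φ 0 - φ 3 ≤ Real.pi)
    (hrange : ∀ j, -(3 * Real.pi / 4) < φ j ∧ φ j ≤ 3 * Real.pi / 4)
    (S : Fin 4 → ℝ)
    (hS : S = fun j => if φ j ≤ -(Real.pi / 4) then φ j + Real.pi else φ j)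
    (n : ℕ)
    (hn : n = (univ.filter (fun j : Fin 4 => φ j ≤ -(Real.pi / 4))).card) :
    (∑ j, S j = Real.pi * n) ∧
    Multiset.map (fun j : Fin 4 => sortDesc S j - if (j : ℕ) < n then Real.pi else 0)
        Finset.univ.val =
      Multiset.map φ Finset.univ.val := by
  obtain ⟨h01, h12, h23⟩ := hord
  have hπ := Real.pi_pos
  by_cases h0 : φ 0 ≤ -(Real.pi / 4)
  · exfalso; linarith
  by_cases h1 : φ 1 ≤ -(Real.pi / 4)
  · -- n = 3
    have h2 : φ 2 ≤ -(Real.pi / 4) := le_trans h12 h1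
    have h3 : φ 3 ≤ -(Real.pi / 4) := le_trans h23 h2
    have hn' : n = 3 := by
      rw [hn, Finset.card_filter, Fin.sum_univ_four]; simp [h0, h1, h2, h3]
    subst hn'
    set T : Fin 4 → ℝ := ![φ 1 + Real.pi, φ 2 + Real.pi, φ 3 + Real.pi, φ 0] with hT
    have hST : S = T ∘ ⇑rot3 := by
      funext i
      fin_cases i <;> simp [hS, hT, rot3, h0, h1, h2, h3]
    have hanti : Antitone T := by
      apply antitone4 <;> simp [hT] <;> linarith
    have hsd : sortDesc S = T := by rw [hST, sortDesc_perm]; exact sortDesc_of_antitone hanti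
    constructor
    · rw [hS, Fin.sum_univ_four]
      simp only [h0, h1, h2, h3, if_pos, if_neg, if_true, if_false]
      push_cast; linarith
    · have hF : (fun j : Fin 4 => sortDesc S j - if (j : ℕ) < 3 then Real.pi else 0)
          = ![φ 1, φ 2, φ 3, φ 0] := by
        funext j; fin_cases j <;> simp [hsd, hT] <;> ring
      rw [hF]
      exact mrot3 φ
  by_cases h2 : φ 2 ≤ -(Real.pi / 4)
  · -- n = 2
    have h3 : φ 3 ≤ -(Real.pi / 4) := le_trans h23 h2
    have hn' : n = 2 := by
      rw [hn, Finset.card_filter, Fin.sum_univ_four]; simp [h0, h1, h2, h3]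
    subst hn'
    set T : Fin 4 → ℝ := ![φ 2 + Real.pi, φ 3 + Real.pi, φ 0, φ 1] with hT
    have hST : S = T ∘ ⇑rot2 := by
      funext i
      fin_cases i <;> simp [hS, hT, rot2, h0, h1, h2, h3]
    have hanti : Antitone T := by
      apply antitone4 <;> simp [hT] <;> linarith
    have hsd : sortDesc S = T := by rw [hST, sortDesc_perm]; exact sortDesc_of_antitone hanti
    constructor
    · rw [hS, Fin.sum_univ_four]
      simp only [h0, h1, h2, h3, if_pos, if_neg, if_true, if_false]
      push_cast; linarith
    · have hF : (fun j : Fin 4 => sortDesc S j - if (j : ℕ) < 2 then Real.pi else 0)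
          = ![φ 2, φ 3, φ 0, φ 1] := by
        funext j; fin_cases j <;> simp [hsd, hT] <;> ring
      rw [hF]
      exact mrot2 φ
  by_cases h3 : φ 3 ≤ -(Real.pi / 4)
  · -- n = 1
    have hn' : n = 1 := by
      rw [hn, Finset.card_filter, Fin.sum_univ_four]; simp [h0, h1, h2, h3]
    subst hn'
    set T : Fin 4 → ℝ := ![φ 3 + Real.pi, φ 0, φ 1, φ 2] with hT
    have hST : S = T ∘ ⇑rot1 := by
      funext i
      fin_cases i <;> simp [hS, hT, rot1, h0, h1, h2, h3]
    have hanti : Antitone T := by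
      apply antitone4 <;> simp [hT] <;> linarith
    have hsd : sortDesc S = T := by rw [hST, sortDesc_perm]; exact sortDesc_of_antitone hanti
    constructor
    · rw [hS, Fin.sum_univ_four]
      simp only [h0, h1, h2, h3, if_pos, if_neg, if_true, if_false]
      push_cast; linarith
    · have hF : (fun j : Fin 4 => sortDesc S j - if (j : ℕ) < 1 then Real.pi else 0)
          = ![φ 3, φ 0, φ 1, φ 2] := by
        funext j; fin_cases j <;> simp [hsd, hT] <;> ring
      rw [hF]
      exact mrot1 φ
  · -- n = 0
    have hn' : n = 0 := by
      rw [hn, Finset.card_filter, Fin.sum_univ_four]; simp [h0, h1, h2, h3]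
    subst hn'
    have hSφ : S = φ := by
      funext i; fin_cases i <;> simp [hS, h0, h1, h2, h3]
    have hsd : sortDesc S = φ := by
      rw [hSφ]; exact sortDesc_of_antitone (antitone4 h01 h12 h23)
    constructor
    · rw [hSφ, Fin.sum_univ_four]; simp [hsum]
    · have hF : (fun j : Fin 4 => sortDesc S j - if (j : ℕ) < 0 then Real.pi else 0) = φ := by
        funext j; simp [hsd]
      rw [hF]
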